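/- Suppose F = f + Ψ where f : ℝⁿ → ℝ is α-strongly convex (α > 0) and L-smooth (L > 0) and Ψ : ℝⁿ → ℝ ∪ {+∞} is proper, closed and convex. Then for all x, y ∈ ℝⁿ, F(y) ≥ F(x̄) + ⟨G_{1/L}(x), y − x⟩ + (1/(2L))‖G_{1/L}(x)‖² + (α/2)‖y − x‖², where x̄ = x − G_{1/L}(x)/L. -/

import Mathlib

open scoped RealInnerProductSpace

private lemma subgrad_aux {n : ℕ} (τ : ℝ) (hτ : 0 < τ)
    (Ψ : EuclideanSpace ℝ (Fin n) → EReal)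
    (hconvex : ∀ x y : EuclideanSpace ℝ (Fin n), ∀ a b : ℝ, 0 ≤ a → 0 ≤ b → a + b = 1 →
      Ψ (a • x + b • y) ≤ (a : EReal) * Ψ x + (b : EReal) * Ψ y)
    (u p y : EuclideanSpace ℝ (Fin n)) (ψp ψy : ℝ)
    (hp : Ψ p = (ψp : EReal)) (hy : Ψ y = (ψy : EReal))
    (hmin : ∀ z, Ψ p + ((‖u - p‖ ^ 2 / (2 * τ) : ℝ) : EReal)
        ≤ Ψ z + ((‖u - z‖ ^ 2 / (2 * τ) : ℝ) : EReal)) :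
    ψp + ⟪u - p, y - p⟫ / τ ≤ ψy := by
  set c : ℝ := ⟪u - p, y - p⟫ with hc
  set d : ℝ := ‖y - p‖ ^ 2 with hd
  have hd0 : 0 ≤ d := by positivity
  have key : ∀ t : ℝ, 0 < t → t ≤ 1 → ψp + c / τ - t * d / (2 * τ) ≤ ψy := by
    intro t ht ht1
    have hcv := hconvex p y (1 - t) t (by linarith) ht.le (by ring)
    set z : EuclideanSpace ℝ (Fin n) := (1 - t) • p + t • y with hz
    rw [hp, hy] at hcv
    have hcz : Ψ z ≤ (((1 - t) * ψp + t * ψy : ℝ) : EReal) := by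
      push_cast
      exact hcv
    have hm := (hmin z).trans (add_le_add hcz le_rfl)
    rw [hp, ← EReal.coe_add, ← EReal.coe_add, EReal.coe_le_coe_iff] at hm
    have hzz : u - z = (u - p) - t • (y - p) := by
      rw [hz]; module
    have hnorm : ‖u - z‖ ^ 2 = ‖u - p‖ ^ 2 - 2 * t * c + t ^ 2 * d := by
      rw [hzz, norm_sub_sq_real, real_inner_smul_right, norm_smul,
        Real.norm_eq_abs, abs_of_pos ht, hc, hd, mul_pow]
      ring
    rw [hnorm] at hm
    have hmul : t * ((ψp + c / τ - t * d / (2 * τ)) - ψy) ≤ 0 := by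
      have expand : t * ((ψp + c / τ - t * d / (2 * τ)) - ψy)
          = (ψp + ‖u - p‖ ^ 2 / (2 * τ))
            - ((1 - t) * ψp + t * ψy + (‖u - p‖ ^ 2 - 2 * t * c + t ^ 2 * d) / (2 * τ)) := by
        field_simp
        ring
      rw [expand]; linarith
    nlinarith [hmul, ht]
  refine le_of_forall_pos_le_add ?_
  intro ε hε
  set t : ℝ := min 1 (ε * (2 * τ) / (d + 1)) with htdef
  have ht0 : 0 < t := by
    apply lt_min one_pos
    positivity
  have ht1 : t ≤ 1 := min_le_left _ _
  have h1 := key t ht0 ht1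
  have htd : t * d ≤ ε * (2 * τ) := by
    calc t * d ≤ (ε * (2 * τ) / (d + 1)) * d :=
          mul_le_mul_of_nonneg_right (min_le_right _ _) hd0
      _ ≤ ε * (2 * τ) := by
          rw [div_mul_eq_mul_div, div_le_iff₀ (by linarith)]
          nlinarith
  have : t * d / (2 * τ) ≤ ε := by
    rw [div_le_iff₀ (by linarith)]
    linarith
  linarith

/-- lower quadratic bound for strongly convex composite functions
in terms of the prox-gradient. -/
theorem prox_gradient_strong_convexity_bound {n : ℕ} (L α : ℝ) (hL : 0 < L) (hα : 0 < α)
    (f : EuclideanSpace ℝ (Fin n) → ℝ)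
    (f' : EuclideanSpace ℝ (Fin n) → EuclideanSpace ℝ (Fin n))
    (hdiff : ∀ x, HasGradientAt f (f' x) x)
    (hsmooth : ∀ x y : EuclideanSpace ℝ (Fin n),
      |f x - f y - ⟪f' y, x - y⟫| ≤ L / 2 * ‖x - y‖ ^ 2)
    (hstrong : ∀ x y : EuclideanSpace ℝ (Fin n),
      f x + ⟪f' x, y - x⟫ + α / 2 * ‖y - x‖ ^ 2 ≤ f y)
    (Ψ : EuclideanSpace ℝ (Fin n) → EReal)
    (hproper : (∀ x, Ψ x ≠ ⊥) ∧ (∃ x, Ψ x ≠ ⊤))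
    (hclosed : LowerSemicontinuous Ψ)
    (hconvex : ∀ x y : EuclideanSpace ℝ (Fin n), ∀ a b : ℝ, 0 ≤ a → 0 ≤ b → a + b = 1 →
      Ψ (a • x + b • y) ≤ (a : EReal) * Ψ x + (b : EReal) * Ψ y)
    (prox : ℝ → EuclideanSpace ℝ (Fin n) → EuclideanSpace ℝ (Fin n))
    (hprox : ∀ t : ℝ, 0 < t → ∀ x z : EuclideanSpace ℝ (Fin n),
      Ψ (prox t x) + ((‖x - prox t x‖ ^ 2 / (2 * t) : ℝ) : EReal)
        ≤ Ψ z + ((‖x - z‖ ^ 2 / (2 * t) : ℝ) : EReal))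
    (F : EuclideanSpace ℝ (Fin n) → EReal)
    (hF : ∀ x, F x = (f x : EReal) + Ψ x)
    (G : ℝ → EuclideanSpace ℝ (Fin n) → EuclideanSpace ℝ (Fin n))
    (hG : ∀ t x, G t x = t⁻¹ • (x - prox t (x - t • f' x))) :
    ∀ x y : EuclideanSpace ℝ (Fin n),
      F (x - (1 / L) • G (1 / L) x)
        + ((⟪G (1 / L) x, y - x⟫ + 1 / (2 * L) * ‖G (1 / L) x‖ ^ 2
            + α / 2 * ‖y - x‖ ^ 2 : ℝ) : EReal)
        ≤ F y := by
  intro x y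
  have hτ : (0 : ℝ) < 1 / L := by positivity
  set g : EuclideanSpace ℝ (Fin n) := f' x with hg
  set u : EuclideanSpace ℝ (Fin n) := x - (1 / L) • g with hu
  set p : EuclideanSpace ℝ (Fin n) := prox (1 / L) u with hpdef
  -- G (1/L) x = L • (x - p)
  have eG : G (1 / L) x = L • (x - p) := by
    rw [hG, one_div, inv_inv, hpdef, hu, one_div]
  have ebar : x - (1 / L) • G (1 / L) x = p := by
    rw [eG, smul_smul, one_div, inv_mul_cancel₀ hL.ne', one_smul, sub_sub_cancel]
  rw [ebar]
  -- case Ψ y = ⊤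
  by_cases hyt : Ψ y = ⊤
  · rw [hF y, hyt]
    simp
  -- Ψ y is real
  have hyb : Ψ y ≠ ⊥ := hproper.1 y
  set ψy : ℝ := (Ψ y).toReal with hψy
  have hy : Ψ y = (ψy : EReal) := (EReal.coe_toReal hyt hyb).symm
  -- Ψ p is real
  have hmin := hprox (1 / L) hτ u
  have hpt : Ψ p ≠ ⊤ := by
    intro htop
    have h := hmin y
    rw [← hpdef, htop, hy, EReal.top_add_coe, top_le_iff, ← EReal.coe_add] at h
    exact EReal.coe_ne_top _ h
  have hpb : Ψ p ≠ ⊥ := hproper.1 p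
  set ψp : ℝ := (Ψ p).toReal with hψp
  have hp : Ψ p = (ψp : EReal) := (EReal.coe_toReal hpt hpb).symm
  -- subgradient inequality
  have hsub : ψp + ⟪u - p, y - p⟫ / (1 / L) ≤ ψy := by
    refine subgrad_aux (1 / L) hτ Ψ hconvex u p y ψp ψy hp hy ?_
    intro z
    have h := hmin z
    rw [← hpdef] at h
    exact h
  -- strong convexity
  have hsc := hstrong x y
  -- smoothness at p
  have hsm : f p ≤ f x + ⟪g, p - x⟫ + L / 2 * ‖p - x‖ ^ 2 := by
    have := abs_le.mp (hsmooth p x)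
    linarith [this.2]
  -- inner product expansions
  have e1 : u - p = (x - p) - (1 / L) • g := by rw [hu]; module
  have e2 : y - p = (y - x) + (x - p) := by module
  have e3 : ⟪u - p, y - p⟫ = ⟪x - p, y - x⟫ + ‖x - p‖ ^ 2
      - (1 / L) * ⟪g, y - x⟫ - (1 / L) * ⟪g, x - p⟫ := by
    rw [e1, e2, inner_sub_left, inner_add_right, inner_add_right,
      real_inner_smul_left, real_inner_smul_left,
      real_inner_self_eq_norm_sq, real_inner_comm (y - x) (x - p)]
    ring
  have e4 : ⟪G (1 / L) x, y - x⟫ = L * ⟪x - p, y - x⟫ := by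
    rw [eG, real_inner_smul_left]
  have e5 : ‖G (1 / L) x‖ ^ 2 = L ^ 2 * ‖x - p‖ ^ 2 := by
    rw [eG, norm_smul, Real.norm_eq_abs, abs_of_pos hL, mul_pow]
  have e6 : ⟪g, p - x⟫ = - ⟪g, x - p⟫ := by
    rw [← inner_neg_right]; congr 1; module
  have e7 : ‖p - x‖ = ‖x - p‖ := norm_sub_rev _ _
  have e8 : ⟪f' x, y - x⟫ = ⟪g, y - x⟫ := by rw [hg]
  -- combine, in reals
  have hsub' : ψp + L * ⟪x - p, y - x⟫ + L * ‖x - p‖ ^ 2 - ⟪g, y - x⟫ - ⟪g, x - p⟫ ≤ ψy := by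
    rw [e3] at hsub
    have hdiv : (⟪x - p, y - x⟫ + ‖x - p‖ ^ 2 - 1 / L * ⟪g, y - x⟫ - 1 / L * ⟪g, x - p⟫) / (1 / L)
        = L * ⟪x - p, y - x⟫ + L * ‖x - p‖ ^ 2 - ⟪g, y - x⟫ - ⟪g, x - p⟫ := by
      field_simp
    rw [hdiv] at hsub
    linarith
  rw [e6, e7] at hsm
  rw [e8] at hsc
  have hreal : f p + ψp + (⟪G (1 / L) x, y - x⟫ + 1 / (2 * L) * ‖G (1 / L) x‖ ^ 2
      + α / 2 * ‖y - x‖ ^ 2) ≤ f y + ψy := by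
    rw [e4, e5]
    have hL2 : 1 / (2 * L) * (L ^ 2 * ‖x - p‖ ^ 2) = L / 2 * ‖x - p‖ ^ 2 := by
      field_simp
    rw [hL2]
    linarith
  rw [hF p, hF y, hp, hy]
  exact_mod_cast hreal
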